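/- For all natural numbers n ≥ 1 and d with 0 ≤ d ≤ n − 1, the following identity holds in ℚ: Σ_{j=d+1}^{n} ((−1)^{j−1}/j) · C(n−d−1, j−d−1) = (−1)^d / (n · C(n−1, d)), where C(a,b) denotes the binomial coefficient. (This computes the coefficient of a permutation with d descents in the first Eulerian idempotent applied to a word of n distinct letters.) -/

import Mathlib

open Finset

lemma eulerian_aux (m : ℕ) : ∀ d : ℕ,
    ∑ k ∈ Finset.range (m + 1), (-1 : ℚ) ^ k * (m.choose k : ℚ) / ((d : ℚ) + 1 + k) =
      (m.factorial : ℚ) * (d.factorial : ℚ) / ((m + d + 1).factorial : ℚ) := by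
  induction m with
  | zero =>
    intro d
    have : ((d : ℚ) + 1) ≠ 0 := by positivity
    have h4 : (d.factorial : ℚ) ≠ 0 := by positivity
    simp [Nat.factorial_succ]
    field_simp
  | succ m ih =>
    intro d
    have hz : ((m.choose (m + 1)) : ℚ) = 0 := by
      simp [Nat.choose_eq_zero_of_lt]
    have hstep : ∑ k ∈ Finset.range (m + 2), (-1 : ℚ) ^ k * ((m+1).choose k : ℚ) / ((d : ℚ) + 1 + k)
        = (∑ k ∈ Finset.range (m + 1), (-1 : ℚ) ^ k * (m.choose k : ℚ) / ((d : ℚ) + 1 + k))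
          - ∑ k ∈ Finset.range (m + 1), (-1 : ℚ) ^ k * (m.choose k : ℚ) / (((d+1 : ℕ) : ℚ) + 1 + k) := by
      rw [Finset.sum_range_succ' (fun k => (-1 : ℚ) ^ k * ((m+1).choose k : ℚ) / ((d : ℚ) + 1 + k)) (m + 1)]
      have hcongr : ∀ k ∈ Finset.range (m + 1),
          (-1 : ℚ) ^ (k + 1) * ((m+1).choose (k + 1) : ℚ) / ((d : ℚ) + 1 + (k + 1 : ℕ))
            = (-1 : ℚ) ^ (k + 1) * (m.choose (k + 1) : ℚ) / ((d : ℚ) + 1 + ((k : ℕ) + 1 : ℕ))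
              - (-1 : ℚ) ^ k * (m.choose k : ℚ) / (((d+1 : ℕ) : ℚ) + 1 + k) := by
        intro k _
        push_cast [Nat.choose_succ_succ]
        ring
      rw [Finset.sum_congr rfl hcongr, Finset.sum_sub_distrib]
      rw [Finset.sum_range_succ
        (fun k => (-1 : ℚ) ^ (k + 1) * (m.choose (k + 1) : ℚ) / ((d : ℚ) + 1 + ((k : ℕ) + 1 : ℕ))) m]
      simp only [hz]
      rw [Finset.sum_range_succ' (fun k => (-1 : ℚ) ^ k * (m.choose k : ℚ) / ((d : ℚ) + 1 + k)) m]
      simp [Nat.choose_zero_right]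
      ring
    rw [hstep, ih d, ih (d + 1)]
    have e1 : m + 1 + d + 1 = (m + d + 1) + 1 := by omega
    have e2 : m + (d + 1) + 1 = (m + d + 1) + 1 := by omega
    rw [e1, e2, Nat.factorial_succ (m + d + 1), Nat.factorial_succ m, Nat.factorial_succ d]
    have h1 : ((m + d + 1).factorial : ℚ) ≠ 0 := by positivity
    have h2 : ((m + d + 1 : ℕ) : ℚ) + 1 ≠ 0 := by positivity
    field_simp
    push_cast; ring

theorem eulerian_idempotent_coefficient (n d : ℕ) (hn : 1 ≤ n) (hd : d ≤ n - 1) :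
    ∑ j ∈ Finset.Icc (d + 1) n,
        ((-1 : ℚ) ^ (j - 1) / (j : ℚ)) * ((n - d - 1).choose (j - d - 1) : ℚ) =
      (-1 : ℚ) ^ d / ((n : ℚ) * ((n - 1).choose d : ℚ)) := by
  obtain ⟨m, hm⟩ : ∃ m, n = m + d + 1 := ⟨n - d - 1, by omega⟩
  subst hm
  have hsub1 : m + d + 1 - d - 1 = m := by omega
  rw [hsub1, ← Finset.Ico_add_one_right_eq_Icc, Finset.sum_Ico_eq_sum_range]
  have hrange : m + d + 1 + 1 - (d + 1) = m + 1 := by omega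
  rw [hrange]
  have hterm : ∀ k ∈ Finset.range (m + 1),
      ((-1 : ℚ) ^ (d + 1 + k - 1) / ((d + 1 + k : ℕ) : ℚ)) * ((m).choose (d + 1 + k - d - 1) : ℚ)
        = (-1 : ℚ) ^ d * ((-1 : ℚ) ^ k * (m.choose k : ℚ) / ((d : ℚ) + 1 + k)) := by
    intro k _
    have h1 : d + 1 + k - 1 = d + k := by omega
    have h2 : d + 1 + k - d - 1 = k := by omega
    rw [h1, h2, pow_add]
    push_cast
    ring
  rw [Finset.sum_congr rfl hterm, ← Finset.mul_sum, eulerian_aux m d]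
  have hc : (m + d + 1 - 1) = m + d := by omega
  rw [hc]
  have h1 : ((m + d).choose d : ℚ) * (d.factorial : ℚ) * (m.factorial : ℚ) = ((m + d).factorial : ℚ) := by
    have := Nat.choose_mul_factorial_mul_factorial (Nat.le_add_left d m)
    rw [Nat.add_sub_cancel] at this
    exact_mod_cast this
  have hf : ((m + d + 1).factorial : ℚ) = ((m + d + 1 : ℕ) : ℚ) * ((m + d).factorial : ℚ) := by
    rw [Nat.factorial_succ]; push_cast; ring
  have hne1 : ((m + d + 1 : ℕ) : ℚ) ≠ 0 := by positivity
  have hne2 : ((m + d).choose d : ℚ) ≠ 0 := by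
    exact_mod_cast (Nat.choose_pos (Nat.le_add_left d m)).ne'
  have hne3 : (d.factorial : ℚ) ≠ 0 := by positivity
  have hne4 : (m.factorial : ℚ) ≠ 0 := by positivity
  rw [hf, ← h1]
  field_simp
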